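/- Let K be a field with char K = 0 or char K = p > n, let n ≥ 2, and regard the matrix algebra M_n(K) as a left module over itself by left multiplication. For X ∈ M_n(K), set H_X := {A ∈ M_n(K) | Tr(AX) = 0}. Then σ(H_X) = {Y ∈ M_n(K) | YX = 0} and τ(H_X) = {Y ∈ M_n(K) | YX = 0, or YX = α·I_n for some nonzero α ∈ K}, where I_n is the identity matrix. -/

import Mathlib

/-- `J` is a (two-sided) Mathieu subspace of the `K`-algebra `A`. -/
def IsMathieuSubspace {K A : Type*} [Field K] [Ring A] [Algebra K A]
    (J : Submodule K A) : Prop :=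
  ∀ a : A, (∀ m : ℕ, 1 ≤ m → a ^ m ∈ J) →
    ∀ b c : A, ∃ N : ℕ, 1 ≤ N ∧ ∀ m : ℕ, N ≤ m → b * a ^ m * c ∈ J

/-- A `K`-subspace `J` of `A` is a two-sided ideal of `A` if it absorbs
multiplication on both sides. -/
def IsTwoSidedIdealSubspace {K A : Type*} [Field K] [Ring A] [Algebra K A]
    (J : Submodule K A) : Prop :=
  ∀ a ∈ J, ∀ b : A, b * a ∈ J ∧ a * b ∈ J

variable {K A M : Type*} [Field K] [Ring A] [Algebra K A] [AddCommGroup M]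
  [Module A M] [Module K M] [IsScalarTower K A M]

/-- For `u ∈ M` and a `K`-subspace `N` of `M`, the `K`-subspace
`(N : u) = {a ∈ A | a • u ∈ N}` of `A`. -/
def colonSub (N : Submodule K M) (u : M) : Submodule K A where
  carrier := {a : A | a • u ∈ N}
  add_mem' := by
    intro a b ha hb
    simp only [Set.mem_setOf_eq, add_smul] at *
    exact N.add_mem ha hb
  zero_mem' := by
    simp only [Set.mem_setOf_eq, zero_smul]
    exact N.zero_mem
  smul_mem' := by
    intro r a ha
    simp only [Set.mem_setOf_eq] at *
    rw [smul_assoc]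
    exact N.smul_mem r ha

/-- The set of stable elements of `N`. -/
def sigmaSet (N : Submodule K M) : Set M :=
  {u : M | IsTwoSidedIdealSubspace (colonSub (A := A) N u)}

/-- The set of quasi-stable elements of `N`. -/
def tauSet (N : Submodule K M) : Set M :=
  {u : M | IsMathieuSubspace (colonSub (A := A) N u)}

/-- The `K`-subspace `H_X = {A ∈ Mₙ(K) | Tr(AX) = 0}` of `Mₙ(K)`. -/
def HX {K : Type*} [Field K] {n : ℕ} (X : Matrix (Fin n) (Fin n) K) :
    Submodule K (Matrix (Fin n) (Fin n) K) where
  carrier := {B : Matrix (Fin n) (Fin n) K | (B * X).trace = 0}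
  add_mem' := by
    intro a b ha hb
    simp only [Set.mem_setOf_eq, add_mul, Matrix.trace_add] at *
    rw [ha, hb, add_zero]
  zero_mem' := by
    simp only [Set.mem_setOf_eq, zero_mul, Matrix.trace_zero]
  smul_mem' := by
    intro c B hB
    simp only [Set.mem_setOf_eq] at *
    rw [smul_mul_assoc, Matrix.trace_smul, hB, smul_zero]


namespace Zhao17

section Helpers
open Matrix
variable {K : Type*} [Field K] {n : ℕ}
open Matrix
variable {K : Type*} [Field K] {n : ℕ}

lemma trace_std_mul (M : Matrix (Fin n) (Fin n) K) (k l : Fin n) :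
    (Matrix.single l k (1:K) * M).trace = M k l := by
  simp [Matrix.trace, Matrix.diag, Matrix.mul_apply, Matrix.single, ite_and]

lemma eq_zero_of_forall_trace_mul {M : Matrix (Fin n) (Fin n) K}
    (h : ∀ B, (B * M).trace = 0) : M = 0 := by
  ext k l
  simpa [trace_std_mul] using h (Matrix.single l k 1)

lemma vmv_mul (v w : Fin n → K) (B : Matrix (Fin n) (Fin n) K) :
    Matrix.vecMulVec v w * B = Matrix.vecMulVec v (Matrix.vecMul w B) := by
  ext p q
  simp [Matrix.mul_apply, Matrix.vecMulVec_apply, Matrix.vecMul, dotProduct,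
    Finset.mul_sum, mul_assoc]

lemma vecMul_vmv (v w u : Fin n → K) :
    Matrix.vecMul u (Matrix.vecMulVec v w) = (u ⬝ᵥ v) • w := by
  ext q
  simp [Matrix.vecMul, Matrix.vecMulVec_apply, dotProduct, Finset.sum_mul, mul_assoc]

lemma trace_vmv (v w : Fin n → K) : (Matrix.vecMulVec v w).trace = w ⬝ᵥ v := by
  simp [Matrix.trace, Matrix.diag, Matrix.vecMulVec_apply, dotProduct, mul_comm]

lemma vmv_idem {v w : Fin n → K} (h : w ⬝ᵥ v = 1) :
    Matrix.vecMulVec v w * Matrix.vecMulVec v w = Matrix.vecMulVec v w := by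
  rw [vmv_mul, vecMul_vmv, h, one_smul]

lemma dot_two {i j : Fin n} (hij : i ≠ j) (c d : K) (f : Fin n → K) :
    f ⬝ᵥ (fun q => if q = i then c else if q = j then d else 0) = c * f i + d * f j := by
  rw [dotProduct]
  have key : ∀ x : Fin n, (f x * if x = i then c else if x = j then d else 0)
      = (if x = i then c * f x else 0) + (if x = j then d * f x else 0) := by
    intro x
    by_cases h1 : x = i
    · subst h1; simp [hij]; ring
    · by_cases h2 : x = j
      · subst h2; simp [h1]; ring
      · simp [h1, h2]
  rw [Finset.sum_congr rfl fun x _ => key x, Finset.sum_add_distrib]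
  simp

lemma exists_idem (hn : 2 ≤ n) {Z : Matrix (Fin n) (Fin n) K}
    (hZ : ∀ α : K, Z ≠ α • 1) :
    ∃ a : Matrix (Fin n) (Fin n) K, a * a = a ∧ (a * Z).trace = 0 ∧ a * Z ≠ 0 := by
  by_cases hoff : ∃ i j, i ≠ j ∧ Z i j ≠ 0
  · obtain ⟨i, j, hij, hZij⟩ := hoff
    set t : K := -Z i i / Z i j with htdef
    set v : Fin n → K := fun q => if q = i then 1 else if q = j then t else 0 with hv
    set w : Fin n → K := fun q => if q = i then 1 else 0 with hw
    have hrowq : ∀ q, Matrix.vecMul w Z q = Z i q := by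
      intro q
      simp [hw, Matrix.vecMul, dotProduct]
    have hwv : w ⬝ᵥ v = 1 := by
      rw [hv, dot_two hij]
      simp [hw, hij.symm]
    refine ⟨Matrix.vecMulVec v w, vmv_idem hwv, ?_, ?_⟩
    · rw [vmv_mul, trace_vmv, hv, dot_two hij, hrowq, hrowq, htdef]
      field_simp
      ring
    · intro hcon
      rw [vmv_mul] at hcon
      have h2 := congrFun (congrFun hcon i) j
      rw [Matrix.vecMulVec_apply, hrowq j] at h2
      simp [hv] at h2
      exact hZij h2
  · push_neg at hoff
    have hne : ∃ i j, Z i i ≠ Z j j := by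
      by_contra hcon
      push_neg at hcon
      apply hZ (Z ⟨0, by omega⟩ ⟨0, by omega⟩)
      ext p q
      by_cases hpq : p = q
      · subst hpq
        simp [Matrix.one_apply, hcon p ⟨0, by omega⟩]
      · simp [Matrix.one_apply, hpq, hoff p q hpq]
    obtain ⟨i, j, hZij⟩ := hne
    have hij : i ≠ j := fun h => hZij (by rw [h])
    set d : K := Z j j - Z i i with hd
    have hd0 : d ≠ 0 := sub_ne_zero.mpr (Ne.symm hZij)
    set x : K := Z j j / d with hx
    set y : K := -Z i i / d with hy
    set v : Fin n → K := fun q => if q = i then x else if q = j then y else 0 with hv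
    set w : Fin n → K := fun q => if q = i then 1 else if q = j then 1 else 0 with hw
    have hrowq : ∀ q, Matrix.vecMul w Z q = Z i q + Z j q := by
      intro q
      have key : ∀ p : Fin n, (w p * Z p q)
          = (if p = i then Z p q else 0) + (if p = j then Z p q else 0) := by
        intro p
        rw [hw]
        by_cases h1 : p = i
        · subst h1; simp [hij]
        · by_cases h2 : p = j
          · subst h2; simp [h1]
          · simp [h1, h2]
      rw [Matrix.vecMul, dotProduct, Finset.sum_congr rfl fun p _ => key p,
        Finset.sum_add_distrib]
      simp
    have hwv : w ⬝ᵥ v = 1 := by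
      rw [hv, dot_two hij]
      rw [hw]
      simp [hij.symm]
      rw [hx, hy, hd]
      field_simp
      ring
    refine ⟨Matrix.vecMulVec v w, vmv_idem hwv, ?_, ?_⟩
    · rw [vmv_mul, trace_vmv, hv, dot_two hij, hrowq, hrowq,
        hoff i j hij, hoff j i hij.symm, hx, hy, hd]
      field_simp
      ring
    · intro hcon
      rw [vmv_mul] at hcon
      by_cases hZii : Z i i = 0
      · have hZjj : Z j j ≠ 0 := fun h => hZij (by rw [hZii, h])
        have h2 := congrFun (congrFun hcon i) j
        rw [Matrix.vecMulVec_apply, hrowq j, hoff i j hij] at h2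
        simp [hv, hx, hZii, hd, sub_zero] at h2
        tauto
      · have h2 := congrFun (congrFun hcon j) i
        rw [Matrix.vecMulVec_apply, hrowq i, hoff j i hij.symm] at h2
        simp [hv, hij.symm, hy] at h2
        tauto

end Helpers

section Nilp
open Module Module.End LinearMap Polynomial
open Module Module.End LinearMap Polynomial

lemma restrict_trace_pow {L : Type*} [Field L] {V : Type*} [AddCommGroup V] [Module L V]
    [FiniteDimensional L V] (f : Module.End L V) (μ : L)
    (hm : Set.MapsTo f (f.maxGenEigenspace μ) (f.maxGenEigenspace μ)) (m : ℕ) :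
    LinearMap.trace L (f.maxGenEigenspace μ) ((f.restrict hm) ^ m)
      = μ ^ m * (finrank L (f.maxGenEigenspace μ) : L) := by
  induction m with
  | zero => simp [LinearMap.trace_one]
  | succ m ih =>
    have hmt : Set.MapsTo (f - algebraMap L (Module.End L V) μ)
        (f.maxGenEigenspace μ) (f.maxGenEigenspace μ) :=
      Module.End.mapsTo_maxGenEigenspace_of_comm
        (Algebra.mul_sub_algebraMap_commutes f μ) μ
    have hnil : IsNilpotent ((f.restrict hm) - algebraMap L _ μ) := by
      have h1 := f.isNilpotent_restrict_maxGenEigenspace_sub_algebraMap μ hmt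
      have h2 : (f - algebraMap L (Module.End L V) μ).restrict hmt
          = (f.restrict hm) - algebraMap L _ μ := by
        ext x
        simp [LinearMap.restrict_apply, Module.algebraMap_end_apply]
        rfl
      rwa [h2] at h1
    have hcomm : Commute ((f.restrict hm) ^ m) (f.restrict hm) :=
      (Commute.refl _).pow_left m
    calc LinearMap.trace L _ ((f.restrict hm) ^ (m + 1))
        = LinearMap.trace L _ (((f.restrict hm) ^ m) ∘ₗ (f.restrict hm)) := by
          rw [pow_succ]; rfl
      _ = μ * LinearMap.trace L _ ((f.restrict hm) ^ m) :=
          LinearMap.trace_comp_eq_mul_of_commute_of_isNilpotent μ hcomm hnil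
      _ = μ ^ (m + 1) * (finrank L (f.maxGenEigenspace μ) : L) := by
          rw [ih]; ring

open Module Module.End LinearMap Polynomial

lemma isNilpotent_end_of_trace_pow {L : Type*} [Field L] [IsAlgClosed L] {V : Type*}
    [AddCommGroup V] [Module L V] [FiniteDimensional L V]
    (hchar : ∀ d : ℕ, 0 < d → d ≤ finrank L V → (d : L) ≠ 0)
    (f : Module.End L V) (h : ∀ m : ℕ, 1 ≤ m → LinearMap.trace L V (f ^ m) = 0) :
    IsNilpotent f := by
  classical
  set N : L → Submodule L V := f.maxGenEigenspace with hN
  have hind : iSupIndep N := f.independent_maxGenEigenspace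
  have htop : ⨆ μ, N μ = ⊤ := f.iSup_maxGenEigenspace_eq_top
  have hInt : DirectSum.IsInternal N :=
    DirectSum.isInternal_submodule_of_iSupIndep_of_iSup_eq_top hind htop
  have hfin : {μ | N μ ≠ ⊥}.Finite := by
    apply f.finite_hasEigenvalue.subset
    intro μ hμ
    exact (Module.End.hasUnifEigenvalue_iff_hasUnifEigenvalue_one (by norm_num)).mp hμ
  have hmt : ∀ μ, Set.MapsTo f (N μ) (N μ) :=
    fun μ => Module.End.mapsTo_maxGenEigenspace_of_comm (Commute.refl f) μ
  have hsum : ∀ m : ℕ, 1 ≤ m →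
      ∑ μ ∈ hfin.toFinset, μ ^ m * (finrank L (N μ) : L) = 0 := by
    intro m hm1
    have hmt' : ∀ μ, Set.MapsTo (f ^ m) (N μ) (N μ) :=
      fun μ => Module.End.mapsTo_maxGenEigenspace_of_comm ((Commute.refl f).pow_right m) μ
    have key := LinearMap.trace_eq_sum_trace_restrict' hInt hfin hmt'
    rw [h m hm1] at key
    rw [key]
    apply Finset.sum_congr rfl
    intro μ _
    rw [← restrict_trace_pow f μ (hmt μ) m]
    congr 1
    exact Module.End.pow_restrict m (hmt μ)
  have hzero : ∀ μ, μ ≠ 0 → N μ = ⊥ := by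
    intro μ0 hμ0
    by_contra hb
    set t : Finset L := hfin.toFinset.erase 0 with ht
    have hμ0t : μ0 ∈ t := by
      simp [ht, hμ0, hb]
    have hsum' : ∀ m : ℕ, 1 ≤ m → ∑ μ ∈ t, μ ^ m * (finrank L (N μ) : L) = 0 := by
      intro m hm1
      rw [← hsum m hm1]
      apply Finset.sum_subset (Finset.erase_subset _ _)
      intro x hx hxt
      have hx0 : x = 0 := by
        by_contra hxx
        exact hxt (Finset.mem_erase.mpr ⟨hxx, hx⟩)
      rw [hx0, zero_pow (by omega), zero_mul]
    set Q : Polynomial L := Lagrange.basis (insert 0 t) _root_.id μ0 with hQ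
    have hQ0 : Q.eval 0 = 0 :=
      Lagrange.eval_basis_of_ne (v := _root_.id) (j := (0 : L))
        (fun hc => hμ0 hc) (Finset.mem_insert_self 0 t)
    have hQself : Q.eval μ0 = 1 :=
      Lagrange.eval_basis_self (Set.injOn_id _) (Finset.mem_insert_of_mem hμ0t)
    have hc0 : Q.coeff 0 = 0 := by rwa [Polynomial.coeff_zero_eq_eval_zero]
    have hkey : ∑ μ ∈ t, Q.eval μ * (finrank L (N μ) : L) = 0 := by
      have expand : ∀ μ ∈ t, Q.eval μ * (finrank L (N μ) : L)
          = ∑ i ∈ Finset.range (Q.natDegree + 1), Q.coeff i * (μ ^ i * (finrank L (N μ) : L)) := by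
        intro μ _
        rw [Polynomial.eval_eq_sum_range, Finset.sum_mul]
        apply Finset.sum_congr rfl
        intro i _
        ring
      rw [Finset.sum_congr rfl expand, Finset.sum_comm]
      apply Finset.sum_eq_zero
      intro i _
      rcases Nat.eq_zero_or_pos i with hi | hi
      · simp [hi, hc0]
      · rw [← Finset.mul_sum, hsum' i hi, mul_zero]
    have hd0 : (finrank L (N μ0) : L) = 0 := by
      rw [← hkey, Finset.sum_eq_single_of_mem μ0 hμ0t]
      · rw [hQself, one_mul]
      · intro ν hν hne
        have : Q.eval ν = 0 :=
          Lagrange.eval_basis_of_ne (v := _root_.id) (j := ν)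
            (fun hc => hne hc.symm) (Finset.mem_insert_of_mem hν)
        rw [this, zero_mul]
    have h1 : 0 < finrank L (N μ0) :=
      finrank_pos_iff.mpr (Submodule.nontrivial_iff_ne_bot.mpr hb)
    exact hchar _ h1 (Submodule.finrank_le (N μ0)) hd0
  have htop0 : N 0 = ⊤ := by
    refine le_antisymm le_top ?_
    rw [← htop]
    apply iSup_le
    intro μ
    by_cases hμ : μ = 0
    · subst hμ; exact le_rfl
    · rw [hzero μ hμ]; exact bot_le
  have hnil : ∀ x : V, ∃ k : ℕ, (f ^ k) x = 0 := by
    intro x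
    have hx : x ∈ N 0 := htop0 ▸ Submodule.mem_top
    rw [hN, Module.End.mem_maxGenEigenspace] at hx
    obtain ⟨k, hk⟩ := hx
    exact ⟨k, by simpa using hk⟩
  exact ((LinearMap.charpoly_nilpotent_tfae f).out 2 0).mp hnil

open Module LinearMap Polynomial

lemma matrix_pow_eq_zero_of_isNilpotent {K : Type*} [Field K] {n : ℕ}
    {a : Matrix (Fin n) (Fin n) K} (h : IsNilpotent a) : a ^ n = 0 := by
  have h1 := Matrix.isNilpotent_charpoly_sub_pow_of_isNilpotent h
  have h2 : a.charpoly = X ^ (Fintype.card (Fin n)) := by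
    have := h1.eq_zero
    rwa [sub_eq_zero] at this
  have h3 := a.aeval_self_charpoly
  rw [h2] at h3
  simpa [Fintype.card_fin] using h3

lemma matrix_pow_eq_zero_of_trace_pow {K : Type*} [Field K] {n : ℕ}
    (hchar : ∀ d : ℕ, 0 < d → d ≤ n → (d : K) ≠ 0)
    (a : Matrix (Fin n) (Fin n) K) (h : ∀ m : ℕ, 1 ≤ m → (a ^ m).trace = 0) :
    a ^ n = 0 := by
  let L := AlgebraicClosure K
  let φ : K →+* L := algebraMap K L
  have hinj : Function.Injective φ := φ.injective
  set b : Matrix (Fin n) (Fin n) L := φ.mapMatrix a with hb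
  have hbpow : ∀ m : ℕ, b ^ m = φ.mapMatrix (a ^ m) := fun m => (map_pow φ.mapMatrix a m).symm
  have htrmap : ∀ c : Matrix (Fin n) (Fin n) K, (φ.mapMatrix c).trace = φ c.trace := by
    intro c
    simp [Matrix.trace, RingHom.mapMatrix_apply, Matrix.diag, map_sum]
  have hbtr : ∀ m : ℕ, 1 ≤ m → (b ^ m).trace = 0 := by
    intro m hm
    rw [hbpow m, htrmap, h m hm, map_zero]
  set f : Module.End L (Fin n → L) := Matrix.toLinAlgEquiv' b with hf
  have hftr : ∀ m : ℕ, 1 ≤ m → LinearMap.trace L (Fin n → L) (f ^ m) = 0 := by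
    intro m hm
    rw [hf, ← map_pow, LinearMap.trace_eq_matrix_trace L (Pi.basisFun L (Fin n)),
      _root_.LinearMap.toMatrix_eq_toMatrix']
    have : LinearMap.toMatrix' (Matrix.toLinAlgEquiv' (b ^ m) : (Fin n → L) →ₗ[L] (Fin n → L))
        = b ^ m := LinearMap.toMatrixAlgEquiv'_toLinAlgEquiv' (b ^ m)
    rw [this]
    exact hbtr m hm
  have hcharL : ∀ d : ℕ, 0 < d → d ≤ finrank L (Fin n → L) → (d : L) ≠ 0 := by
    intro d h1 h2 hc
    rw [Module.finrank_fin_fun] at h2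
    apply hchar d h1 h2
    apply hinj
    rw [map_natCast, map_zero]
    exact hc
  have hnf : IsNilpotent f := isNilpotent_end_of_trace_pow hcharL f hftr
  have hnb : IsNilpotent b := by
    have := hnf.map (Matrix.toLinAlgEquiv' (R := L) (n := Fin n)).symm
    simpa [hf] using this
  have hbn := matrix_pow_eq_zero_of_isNilpotent hnb
  rw [hbpow n] at hbn
  ext i j
  apply hinj
  have h0 : (φ.mapMatrix (a ^ n)) i j = (0 : Matrix (Fin n) (Fin n) L) i j := by rw [hbn]
  simpa [RingHom.mapMatrix_apply, Matrix.map_apply] using h0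

end Nilp

section Main
open Matrix
variable {K : Type*} [Field K] {n : ℕ}
lemma mem_HX {X B : Matrix (Fin n) (Fin n) K} : B ∈ HX X ↔ (B * X).trace = 0 := Iff.rfl

-- key σ lemma
lemma ideal_iff (hn : 2 ≤ n) (Z : Matrix (Fin n) (Fin n) K) :
    (∀ a ∈ HX Z, ∀ b : Matrix (Fin n) (Fin n) K, b * a ∈ HX Z ∧ a * b ∈ HX Z) ↔ Z = 0 := by
  constructor
  · intro h
    have habs : ∀ a : Matrix (Fin n) (Fin n) K, (a * Z).trace = 0 → a * Z = 0 := by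
      intro a ha
      apply eq_zero_of_forall_trace_mul
      intro b
      have := (h a ha b).1
      rw [mem_HX, mul_assoc] at this
      exact this
    by_contra hZ0
    have : ∃ k l, Z k l ≠ 0 := by
      by_contra hc
      push_neg at hc
      exact hZ0 (by ext k l; simpa using hc k l)
    obtain ⟨k, l, hkl⟩ := this
    set j : Fin n := if l = ⟨0, by omega⟩ then ⟨1, by omega⟩ else ⟨0, by omega⟩ with hj
    have hjl : j ≠ l := by
      rw [hj]
      split
      · rename_i hh
        rw [hh]
        intro hcon
        have := congrArg Fin.val hcon
        simp at this
      · rename_i hh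
        exact fun hcon => hh hcon.symm
    set w : Fin n → K := fun q => if q = k then 1 else 0 with hw
    set v : Fin n → K := fun q => if q = j then Z k l else if q = l then -Z k j else 0 with hv
    have hrowq : ∀ q, Matrix.vecMul w Z q = Z k q := by
      intro q
      simp [hw, Matrix.vecMul, dotProduct]
    have htr : (Matrix.vecMulVec v w * Z).trace = 0 := by
      rw [vmv_mul, trace_vmv, hv, dot_two hjl, hrowq, hrowq]
      ring
    have := habs _ htr
    rw [vmv_mul] at this
    have h2 := congrFun (congrFun this j) l
    rw [Matrix.vecMulVec_apply, hrowq l] at h2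
    simp [hv] at h2
    exact hkl h2
  · intro h a _ b
    subst h
    constructor <;> simp [mem_HX]

lemma mathieu_iff (hn : 2 ≤ n) (hchar : ∀ d : ℕ, 0 < d → d ≤ n → (d : K) ≠ 0)
    (Z : Matrix (Fin n) (Fin n) K) :
    IsMathieuSubspace (HX Z) ↔ (Z = 0 ∨ ∃ α : K, α ≠ 0 ∧ Z = α • 1) := by
  constructor
  · intro h
    by_contra hcon
    push_neg at hcon
    obtain ⟨hZ0, hsc⟩ := hcon
    have hZ : ∀ α : K, Z ≠ α • 1 := by
      intro α
      by_cases hα : α = 0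
      · subst hα; simpa using hZ0
      · exact hsc α hα
    obtain ⟨a, hidem, htr, hne⟩ := exists_idem hn hZ
    have hpow : ∀ m : ℕ, 1 ≤ m → a ^ m = a := by
      intro m hm
      induction m with
      | zero => omega
      | succ k ih =>
        rcases Nat.eq_zero_or_pos k with hk | hk
        · subst hk; simp
        · rw [pow_succ, ih hk, hidem]
    have hmem : ∀ m : ℕ, 1 ≤ m → a ^ m ∈ HX Z := by
      intro m hm
      rw [mem_HX, hpow m hm]
      exact htr
    have hb : ∃ b, (b * (a * Z)).trace ≠ 0 := by
      by_contra hc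
      push_neg at hc
      exact hne (eq_zero_of_forall_trace_mul hc)
    obtain ⟨b, hbne⟩ := hb
    obtain ⟨N, hN1, hN⟩ := h a hmem b 1
    have := hN N le_rfl
    rw [mem_HX, mul_one, hpow N hN1, mul_assoc] at this
    exact hbne this
  · intro h
    rcases h with h | ⟨α, hα, h⟩
    · subst h
      intro a _ b c
      exact ⟨1, le_rfl, fun m _ => by simp [mem_HX]⟩
    · subst h
      intro a ha b c
      have htr0 : ∀ m : ℕ, 1 ≤ m → (a ^ m).trace = 0 := by
        intro m hm
        have := ha m hm
        rw [mem_HX, Matrix.mul_smul, mul_one, Matrix.trace_smul] at this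
        rcases smul_eq_zero.mp this with h | h
        · exact absurd h hα
        · exact h
      have han : a ^ n = 0 := matrix_pow_eq_zero_of_trace_pow hchar a htr0
      refine ⟨n, by omega, fun m hm => ?_⟩
      have : a ^ m = 0 := by
        have : a ^ m = a ^ n * a ^ (m - n) := by
          rw [← pow_add]
          congr 1
          omega
        rw [this, han, zero_mul]
      rw [mem_HX, this]
      simp

lemma colonSub_HX {K : Type*} [Field K] {n : ℕ} (X Y : Matrix (Fin n) (Fin n) K) :
    colonSub (A := Matrix (Fin n) (Fin n) K) (HX X) Y = HX (Y * X) := by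
  ext a
  show a • Y ∈ HX X ↔ _
  rw [smul_eq_mul]
  show ((a * Y) * X).trace = 0 ↔ ((a * (Y * X)).trace = 0)
  rw [mul_assoc]
end Main

end Zhao17

theorem stmt17 {K : Type*} [Field K] {n : ℕ} (hn : 2 ≤ n)
    (hchar : ringChar K = 0 ∨ n < ringChar K)
    (X : Matrix (Fin n) (Fin n) K) :
    sigmaSet (A := Matrix (Fin n) (Fin n) K) (M := Matrix (Fin n) (Fin n) K) (HX X) =
      {Y : Matrix (Fin n) (Fin n) K | Y * X = 0} ∧
    tauSet (A := Matrix (Fin n) (Fin n) K) (M := Matrix (Fin n) (Fin n) K) (HX X) =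
      {Y : Matrix (Fin n) (Fin n) K | Y * X = 0 ∨
        ∃ α : K, α ≠ 0 ∧ Y * X = α • (1 : Matrix (Fin n) (Fin n) K)} := by
  have hchar' : ∀ d : ℕ, 0 < d → d ≤ n → (d : K) ≠ 0 := by
    intro d hd1 hd2 hc
    have hdvd : ringChar K ∣ d := (CharP.cast_eq_zero_iff K (ringChar K) d).mp hc
    rcases hchar with h0 | hp
    · rw [h0] at hdvd
      exact absurd (zero_dvd_iff.mp hdvd) (by omega)
    · have := Nat.le_of_dvd hd1 hdvd
      omega
  constructor
  · ext Y
    show IsTwoSidedIdealSubspace (colonSub (A := Matrix (Fin n) (Fin n) K) (HX X) Y) ↔ _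
    rw [Zhao17.colonSub_HX]
    exact Zhao17.ideal_iff hn (Y * X)
  · ext Y
    show IsMathieuSubspace (colonSub (A := Matrix (Fin n) (Fin n) K) (HX X) Y) ↔ _
    rw [Zhao17.colonSub_HX]
    exact Zhao17.mathieu_iff hn hchar' (Y * X)
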